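/- Suppose all p_{i,n} ≥ 0. If Π_{n=1}^{∞} (Σ_{i : p̃_{i,n} > 0} q̃_{i,n}) = 0, or if Σ_{n=1}^{∞} (Σ_{i : p̃_{i,n} = 0} q̃_{i,n}) = ∞, then F is a singular (Cantor-type) distribution function: F is continuous, nondecreasing, and F′ = 0 Lebesgue-almost everywhere. -/

import Mathlib

open Finset Filter Topology MeasureTheory

noncomputable section

/-- `rowSum p n k = Σ_{i<k} p_{i,n}` (the numbers `β_{k,n}`). -/
def rowSum (p : ℕ → ℕ → ℝ) (n k : ℕ) : ℝ := ∑ i ∈ Finset.range k, p n i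

/-- Index flip at even positions: `tw m f n i = f n i` for odd `n`, `f n (m n - i)` for even `n`. -/
def tw (m : ℕ → ℕ) (f : ℕ → ℕ → ℝ) (n i : ℕ) : ℝ :=
  if Odd n then f n i else f n (m n - i)

/-- Tail value of the (nega-)expansion determined by `f` from position `k+1` on. -/
def negaShift (m : ℕ → ℕ) (f : ℕ → ℕ → ℝ) (d : ℕ → ℕ) (k : ℕ) : ℝ :=
  ∑' j : ℕ, tw m (rowSum f) (k + j + 1) (d (k + j + 1)) *
    ∏ t ∈ Finset.Icc (k + 1) (k + j), tw m f t (d t)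

/-- The nega-expansion value: `negaVal m f d = β̃_{d₁,1} + Σ_{k≥2} β̃_{d_k,k} Π_{j<k} f̃_{d_j,j}`. -/
def negaVal (m : ℕ → ℕ) (f : ℕ → ℕ → ℝ) (d : ℕ → ℕ) : ℝ := negaShift m f d 0

/-- A digit sequence for the alphabet sizes `m`. -/
def ValidDigits (m : ℕ → ℕ) (d : ℕ → ℕ) : Prop := ∀ n, d n ≤ m n

namespace Stmt13

/-- ordinary expansion value from position `k+1` on. -/
def myVal (f : ℕ → ℕ → ℝ) (c : ℕ → ℕ) (k : ℕ) : ℝ :=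
  ∑' j : ℕ, rowSum f (k + j + 1) (c (k + j + 1)) * ∏ t ∈ Finset.Icc (k + 1) (k + j), f t (c t)

def dd (m : ℕ → ℕ) (d : ℕ → ℕ) (n : ℕ) : ℕ := if Odd n then d n else m n - d n

variable {m : ℕ → ℕ} {f : ℕ → ℕ → ℝ} {c d : ℕ → ℕ}

lemma tw_rowSum (m f d n) : tw m (rowSum f) n (d n) = rowSum f n (dd m d n) := by
  unfold tw dd; split <;> rfl

lemma tw_eq' (m f d n) : tw m f n (d n) = f n (dd m d n) := by unfold tw dd; split <;> rfl

lemma negaShift_eq (m f d k) : negaShift m f d k = myVal f (dd m d) k := by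
  unfold negaShift myVal
  refine tsum_congr fun j => ?_
  rw [tw_rowSum]
  congr 1
  exact Finset.prod_congr rfl fun t _ => tw_eq' ..

lemma dd_valid (hd : ValidDigits m d) : ValidDigits m (dd m d) := fun n => by
  unfold dd; split
  exacts [hd n, Nat.sub_le _ _]

lemma dd_dd (hd : ValidDigits m d) : dd m (dd m d) = d := funext fun n => by
  unfold dd; split
  · rfl
  · simp [Nat.sub_sub_self (hd n)]

section Series

variable (hf0 : ∀ n i, i ≤ m n → 0 ≤ f n i)
  (hf2 : ∀ n, ∑ i ∈ Finset.range (m n + 1), f n i = 1)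
  (hc : ValidDigits m c)

include hf0 in
lemma rowSum_nonneg {n k : ℕ} (hk : k ≤ m n + 1) : 0 ≤ rowSum f n k :=
  Finset.sum_nonneg fun i hi => hf0 n i (by
    have := Finset.mem_range.1 hi; omega)

include hf0 in
lemma rowSum_mono {n k k' : ℕ} (h : k ≤ k') (hk' : k' ≤ m n + 1) :
    rowSum f n k ≤ rowSum f n k' := by
  unfold rowSum
  refine Finset.sum_le_sum_of_subset_of_nonneg (Finset.range_subset_range.2 h) fun i hi _ => ?_
  exact hf0 n i (by have := Finset.mem_range.1 hi; omega)

include hf2 in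
lemma rowSum_top (n : ℕ) : rowSum f n (m n + 1) = 1 := hf2 n

lemma rowSum_succ (n k : ℕ) : rowSum f n (k + 1) = rowSum f n k + f n k :=
  Finset.sum_range_succ _ _

include hf0 hf2 in
lemma B_add_A_le_one {n i : ℕ} (hi : i ≤ m n) : rowSum f n i + f n i ≤ 1 := by
  rw [← rowSum_succ]
  calc rowSum f n (i + 1) ≤ rowSum f n (m n + 1) := rowSum_mono hf0 (by omega) le_rfl
  _ = 1 := hf2 n

include hf0 hc in
lemma prodA_nonneg (s : Finset ℕ) : 0 ≤ ∏ t ∈ s, f t (c t) :=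
  Finset.prod_nonneg fun t _ => hf0 t (c t) (hc t)

include hf0 hc in
lemma term_nonneg (k j : ℕ) :
    0 ≤ rowSum f (k + j + 1) (c (k + j + 1)) * ∏ t ∈ Finset.Icc (k + 1) (k + j), f t (c t) :=
  mul_nonneg (rowSum_nonneg hf0 (by have := hc (k + j + 1); omega)) (prodA_nonneg hf0 hc _)

include hf0 hf2 hc in
lemma partial_le_one (k J : ℕ) :
    (∑ j ∈ Finset.range J,
      rowSum f (k + j + 1) (c (k + j + 1)) * ∏ t ∈ Finset.Icc (k + 1) (k + j), f t (c t))
      + ∏ t ∈ Finset.Icc (k + 1) (k + J), f t (c t) ≤ 1 := by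
  induction J with
  | zero => simp
  | succ J ih =>
    rw [Finset.sum_range_succ]
    have hP : 0 ≤ ∏ t ∈ Finset.Icc (k + 1) (k + J), f t (c t) := prodA_nonneg hf0 hc _
    have hicc : ∏ t ∈ Finset.Icc (k + 1) (k + (J + 1)), f t (c t)
        = (∏ t ∈ Finset.Icc (k + 1) (k + J), f t (c t)) * f (k + J + 1) (c (k + J + 1)) := by
      have : k + (J + 1) = (k + J) + 1 := by omega
      rw [this, Finset.prod_Icc_succ_top (by omega)]
    have hBA : rowSum f (k + J + 1) (c (k + J + 1)) + f (k + J + 1) (c (k + J + 1)) ≤ 1 :=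
      B_add_A_le_one hf0 hf2 (hc _)
    have := mul_le_mul_of_nonneg_left hBA hP
    nlinarith [ih]

include hf0 hf2 hc in
lemma summable_term (k : ℕ) :
    Summable (fun j => rowSum f (k + j + 1) (c (k + j + 1)) *
      ∏ t ∈ Finset.Icc (k + 1) (k + j), f t (c t)) := by
  apply summable_of_sum_range_le (c := 1) (term_nonneg hf0 hc k)
  intro J
  have h := partial_le_one hf0 hf2 hc k J
  have hP : 0 ≤ ∏ t ∈ Finset.Icc (k + 1) (k + J), f t (c t) := prodA_nonneg hf0 hc _
  linarith

include hf0 hc in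
lemma myVal_nonneg (k : ℕ) : 0 ≤ myVal f c k :=
  tsum_nonneg (term_nonneg hf0 hc k)

include hf0 hf2 hc in
lemma myVal_le_one (k : ℕ) : myVal f c k ≤ 1 := by
  apply Real.tsum_le_of_sum_range_le (term_nonneg hf0 hc k)
  intro J
  have h := partial_le_one hf0 hf2 hc k J
  have hP : 0 ≤ ∏ t ∈ Finset.Icc (k + 1) (k + J), f t (c t) := prodA_nonneg hf0 hc _
  linarith

include hf0 hf2 hc in
lemma myVal_rec (k : ℕ) :
    myVal f c k = rowSum f (k + 1) (c (k + 1)) + f (k + 1) (c (k + 1)) * myVal f c (k + 1) := by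
  unfold myVal
  rw [Summable.tsum_eq_zero_add (summable_term hf0 hf2 hc k)]
  simp only [Nat.add_zero]
  congr 1
  · simp
  · rw [← tsum_mul_left]
    refine tsum_congr fun j => ?_
    have h1 : k + (j + 1) + 1 = (k + 1) + j + 1 := by omega
    have h2 : Finset.Icc (k + 1) (k + (j + 1)) = Finset.Icc (k + 1) ((k + 1) + j) := by
      congr 1; omega
    rw [h1, h2]
    have h3 : (k + 1) ≤ (k + 1) + j := by omega
    have : ∏ t ∈ Finset.Icc (k + 1) (k + 1 + j), f t (c t)
        = f (k + 1) (c (k + 1)) * ∏ t ∈ Finset.Icc (k + 2) (k + 1 + j), f t (c t) := by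
      rw [← Finset.Ico_add_one_right_eq_Icc, ← Finset.Ico_add_one_right_eq_Icc,
        Finset.prod_eq_prod_Ico_succ_bot (by omega)]
    rw [this]; ring

include hf0 hf2 hc in
lemma myVal_prefix (n : ℕ) :
    myVal f c 0 = (∑ j ∈ Finset.Icc 1 n, rowSum f j (c j) * ∏ t ∈ Finset.Icc 1 (j - 1), f t (c t))
      + (∏ t ∈ Finset.Icc 1 n, f t (c t)) * myVal f c n := by
  induction n with
  | zero => simp
  | succ n ih =>
    rw [ih, Finset.sum_Icc_succ_top (by omega), Finset.prod_Icc_succ_top (by omega),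
      myVal_rec hf0 hf2 hc n]
    simp only [Nat.add_sub_cancel]
    ring

end Series

end Stmt13

namespace Stmt13

variable {m : ℕ → ℕ} {f : ℕ → ℕ → ℝ} {c c' : ℕ → ℕ}

lemma myVal_congr (k : ℕ) (h : ∀ t, k + 1 ≤ t → c t = c' t) :
    myVal f c k = myVal f c' k :=
  tsum_congr fun j => by
    rw [h _ (by omega)]
    congr 1
    exact Finset.prod_congr rfl fun t ht => by rw [h t (Finset.mem_Icc.1 ht).1]

section Series

variable (hf0 : ∀ n i, i ≤ m n → 0 ≤ f n i)
  (hf2 : ∀ n, ∑ i ∈ Finset.range (m n + 1), f n i = 1)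
  (hc : ValidDigits m c) (hc' : ValidDigits m c')

include hf0 hf2 hc hc' in
lemma myVal_le_of_lt {n : ℕ} (hn : 1 ≤ n)
    (hagree : ∀ t, 1 ≤ t → t < n → c t = c' t) (hlt : c n < c' n) :
    myVal f c 0 ≤ myVal f c' 0 := by
  obtain ⟨nn, rfl⟩ : ∃ nn, n = nn + 1 := ⟨n - 1, by omega⟩
  rw [myVal_prefix hf0 hf2 hc nn, myVal_prefix hf0 hf2 hc' nn]
  have hpre : (∑ j ∈ Finset.Icc 1 nn, rowSum f j (c j) * ∏ t ∈ Finset.Icc 1 (j - 1), f t (c t))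
      = ∑ j ∈ Finset.Icc 1 nn, rowSum f j (c' j) * ∏ t ∈ Finset.Icc 1 (j - 1), f t (c' t) := by
    refine Finset.sum_congr rfl fun j hj => ?_
    obtain ⟨hj1, hj2⟩ := Finset.mem_Icc.1 hj
    rw [hagree j hj1 (by omega)]
    congr 1
    refine Finset.prod_congr rfl fun t ht => ?_
    obtain ⟨ht1, ht2⟩ := Finset.mem_Icc.1 ht
    rw [hagree t ht1 (by omega)]
  have hPP : (∏ t ∈ Finset.Icc 1 nn, f t (c t)) = ∏ t ∈ Finset.Icc 1 nn, f t (c' t) := by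
    refine Finset.prod_congr rfl fun t ht => ?_
    obtain ⟨ht1, ht2⟩ := Finset.mem_Icc.1 ht
    rw [hagree t ht1 (by omega)]
  rw [hpre, hPP]
  have hPnn : 0 ≤ ∏ t ∈ Finset.Icc 1 nn, f t (c' t) := prodA_nonneg hf0 hc' _
  have hV : myVal f c nn ≤ myVal f c' nn := by
    rw [myVal_rec hf0 hf2 hc nn, myVal_rec hf0 hf2 hc' nn]
    have h1 : myVal f c (nn + 1) ≤ 1 := myVal_le_one hf0 hf2 hc _
    have h2 : 0 ≤ myVal f c' (nn + 1) := myVal_nonneg hf0 hc' _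
    have hA : 0 ≤ f (nn + 1) (c (nn + 1)) := hf0 _ _ (hc _)
    have hA' : 0 ≤ f (nn + 1) (c' (nn + 1)) := hf0 _ _ (hc' _)
    have hmid : rowSum f (nn + 1) (c (nn + 1)) + f (nn + 1) (c (nn + 1))
        ≤ rowSum f (nn + 1) (c' (nn + 1)) := by
      rw [← rowSum_succ]
      exact rowSum_mono hf0 (by omega) (by have := hc' (nn + 1); omega)
    nlinarith
  nlinarith

end Series

section PosSeries

variable (hfpos : ∀ n i, i ≤ m n → 0 < f n i)
  (hf2 : ∀ n, ∑ i ∈ Finset.range (m n + 1), f n i = 1)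
  (hc : ValidDigits m c)

include hfpos hf2 hc in
lemma eq_one_step {k : ℕ} (h : myVal f c k = 1) :
    c (k + 1) = m (k + 1) ∧ myVal f c (k + 1) = 1 := by
  have hf0 : ∀ n i, i ≤ m n → 0 ≤ f n i := fun n i hi => (hfpos n i hi).le
  have hrec := myVal_rec hf0 hf2 hc k
  have hV1 : myVal f c (k + 1) ≤ 1 := myVal_le_one hf0 hf2 hc _
  have hV0 : 0 ≤ myVal f c (k + 1) := myVal_nonneg hf0 hc _
  have hA : 0 < f (k + 1) (c (k + 1)) := hfpos _ _ (hc _)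
  have hdig : c (k + 1) = m (k + 1) := by
    by_contra hne
    have hlt : c (k + 1) < m (k + 1) := lt_of_le_of_ne (hc _) hne
    have h1 : rowSum f (k + 1) (c (k + 1)) + f (k + 1) (c (k + 1))
        = rowSum f (k + 1) (c (k + 1) + 1) := (rowSum_succ _ _).symm
    have h2 : rowSum f (k + 1) (c (k + 1) + 1) + f (k + 1) (c (k + 1) + 1) ≤ 1 :=
      B_add_A_le_one hf0 hf2 (by omega)
    have h3 : 0 < f (k + 1) (c (k + 1) + 1) := hfpos _ _ (by omega)
    nlinarith
  refine ⟨hdig, ?_⟩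
  have hBA : rowSum f (k + 1) (c (k + 1)) + f (k + 1) (c (k + 1)) = 1 := by
    rw [hdig, ← rowSum_succ]
    exact hf2 _
  nlinarith

include hfpos hf2 hc in
lemma eq_one_levels {k : ℕ} (h : myVal f c k = 1) : ∀ j, myVal f c (k + j) = 1 := by
  intro j
  induction j with
  | zero => exact h
  | succ j ih => exact (eq_one_step hfpos hf2 hc ih).2

include hfpos hf2 hc in
lemma eq_one_tail {k : ℕ} (h : myVal f c k = 1) : ∀ t, k < t → c t = m t := by
  intro t ht
  have h1 := (eq_one_step hfpos hf2 hc (eq_one_levels hfpos hf2 hc h (t - k - 1))).1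
  have : k + (t - k - 1) + 1 = t := by omega
  rwa [this] at h1

include hfpos hf2 hc in
lemma eq_zero_step {k : ℕ} (h : myVal f c k = 0) :
    c (k + 1) = 0 ∧ myVal f c (k + 1) = 0 := by
  have hf0 : ∀ n i, i ≤ m n → 0 ≤ f n i := fun n i hi => (hfpos n i hi).le
  have hrec := myVal_rec hf0 hf2 hc k
  have hV0 : 0 ≤ myVal f c (k + 1) := myVal_nonneg hf0 hc _
  have hA : 0 < f (k + 1) (c (k + 1)) := hfpos _ _ (hc _)
  have hB0 : 0 ≤ rowSum f (k + 1) (c (k + 1)) :=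
    rowSum_nonneg hf0 (by have := hc (k + 1); omega)
  have hB : rowSum f (k + 1) (c (k + 1)) = 0 := by nlinarith
  have hdig : c (k + 1) = 0 := by
    by_contra hne
    have h1 : rowSum f (k + 1) 1 ≤ rowSum f (k + 1) (c (k + 1)) :=
      rowSum_mono hf0 (by omega) (by have := hc (k + 1); omega)
    have h2 : rowSum f (k + 1) 1 = f (k + 1) 0 := by
      unfold rowSum; simp
    have h3 : 0 < f (k + 1) 0 := hfpos _ _ (by omega)
    nlinarith
  exact ⟨hdig, by nlinarith⟩

include hfpos hf2 hc in
lemma eq_zero_tail {k : ℕ} (h : myVal f c k = 0) : ∀ t, k < t → c t = 0 := by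
  have haux : ∀ j, myVal f c (k + j) = 0 := by
    intro j
    induction j with
    | zero => exact h
    | succ j ih => exact (eq_zero_step hfpos hf2 hc ih).2
  intro t ht
  have h1 := (eq_zero_step hfpos hf2 hc (haux (t - k - 1))).1
  have : k + (t - k - 1) + 1 = t := by omega
  rwa [this] at h1

end PosSeries

lemma myVal_bottom {k : ℕ} (h : ∀ t, k < t → c t = 0) : myVal f c k = 0 := by
  unfold myVal
  convert tsum_zero with j
  rw [h (k + j + 1) (by omega)]
  simp [rowSum]

section TopVal

variable (hf0 : ∀ n i, i ≤ m n → 0 ≤ f n i)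
  (hf2 : ∀ n, ∑ i ∈ Finset.range (m n + 1), f n i = 1)
  (hc : ValidDigits m c)

include hf0 hf2 hc in
lemma myVal_top {k : ℕ} (h : ∀ t, k < t → c t = m t)
    (htail : Tendsto (fun N => ∏ t ∈ Finset.Icc (k + 1) N, f t (c t)) atTop (𝓝 0)) :
    myVal f c k = 1 := by
  have key : ∀ n, 1 - myVal f c k
      = (∏ t ∈ Finset.Icc (k + 1) (k + n), f t (c t)) * (1 - myVal f c (k + n)) := by
    intro n
    induction n with
    | zero => simp
    | succ n ih =>
      have hrec := myVal_rec hf0 hf2 hc (k + n)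
      have hB : rowSum f (k + n + 1) (c (k + n + 1)) = 1 - f (k + n + 1) (c (k + n + 1)) := by
        rw [h (k + n + 1) (by omega)]
        have := rowSum_succ (f := f) (k + n + 1) (m (k + n + 1))
        have h2 := hf2 (k + n + 1)
        have h3 : rowSum f (k + n + 1) (m (k + n + 1) + 1) = 1 := h2
        rw [h (k + n + 1) (by omega)] at *
        linarith [this]
      have hstep : 1 - myVal f c (k + n)
          = f (k + n + 1) (c (k + n + 1)) * (1 - myVal f c (k + n + 1)) := by
        rw [hrec, hB]; ring
      have hprod : ∏ t ∈ Finset.Icc (k + 1) (k + (n + 1)), f t (c t)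
          = (∏ t ∈ Finset.Icc (k + 1) (k + n), f t (c t)) * f (k + n + 1) (c (k + n + 1)) := by
        have : k + (n + 1) = (k + n) + 1 := by omega
        rw [this, Finset.prod_Icc_succ_top (by omega)]
      rw [ih, hstep, hprod]
      have : k + (n + 1) = k + n + 1 := by omega
      rw [this]
      ring
  have hbound : ∀ n, |1 - myVal f c k| ≤ ∏ t ∈ Finset.Icc (k + 1) (k + n), f t (c t) := by
    intro n
    rw [key n, abs_mul]
    have hP : 0 ≤ ∏ t ∈ Finset.Icc (k + 1) (k + n), f t (c t) := prodA_nonneg hf0 hc _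
    have h1 : |1 - myVal f c (k + n)| ≤ 1 := by
      rw [abs_le]
      constructor
      · linarith [myVal_le_one hf0 hf2 hc (k + n)]
      · linarith [myVal_nonneg hf0 hc (k + n)]
    calc |∏ t ∈ Finset.Icc (k + 1) (k + n), f t (c t)| * |1 - myVal f c (k + n)|
        ≤ |∏ t ∈ Finset.Icc (k + 1) (k + n), f t (c t)| * 1 :=
          mul_le_mul_of_nonneg_left h1 (abs_nonneg _)
      _ = ∏ t ∈ Finset.Icc (k + 1) (k + n), f t (c t) := by rw [mul_one, abs_of_nonneg hP]
  have htail' : Tendsto (fun n => ∏ t ∈ Finset.Icc (k + 1) (k + n), f t (c t)) atTop (𝓝 0) := by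
    have := htail.comp (tendsto_add_atTop_nat k)
    simpa [Function.comp_def, Nat.add_comm] using this
  have hzero : Tendsto (fun _ : ℕ => 1 - myVal f c k) atTop (𝓝 0) :=
    squeeze_zero_norm hbound htail'
  have := tendsto_nhds_unique hzero tendsto_const_nhds
  linarith

end TopVal

end Stmt13

namespace Stmt13

variable {m : ℕ → ℕ} {f : ℕ → ℕ → ℝ} {c : ℕ → ℕ}

lemma prod_Icc_split (g : ℕ → ℝ) {n N : ℕ} (h : n ≤ N) :
    ∏ t ∈ Finset.Icc 1 N, g t
      = (∏ t ∈ Finset.Icc 1 n, g t) * ∏ t ∈ Finset.Icc (n + 1) N, g t := by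
  rw [← Finset.Ico_add_one_right_eq_Icc, ← Finset.Ico_add_one_right_eq_Icc, ← Finset.Ico_add_one_right_eq_Icc,
    Finset.prod_Ico_consecutive _ (by omega) (by omega)]

lemma tail_tendsto_zero {g : ℕ → ℝ} {n : ℕ} (hC : ∀ t ∈ Finset.Icc 1 n, g t ≠ 0)
    (h : Tendsto (fun N => ∏ t ∈ Finset.Icc 1 N, g t) atTop (𝓝 0)) :
    Tendsto (fun N => ∏ t ∈ Finset.Icc (n + 1) N, g t) atTop (𝓝 0) := by
  have hC0 : (∏ t ∈ Finset.Icc 1 n, g t) ≠ 0 := Finset.prod_ne_zero_iff.2 hC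
  have h2 := h.div_const (∏ t ∈ Finset.Icc 1 n, g t)
  rw [zero_div] at h2
  apply h2.congr'
  filter_upwards [eventually_ge_atTop n] with N hN
  rw [prod_Icc_split g hN]
  field_simp

section Greedy

variable (hf0 : ∀ n i, i ≤ m n → 0 ≤ f n i)
  (hf2 : ∀ n, ∑ i ∈ Finset.range (m n + 1), f n i = 1)

lemma my_findGreatest_spec {P : ℕ → Prop} [DecidablePred P] {b : ℕ} (h0 : P 0) :
    P (Nat.findGreatest P b) := Nat.findGreatest_spec (Nat.zero_le _) h0

lemma my_findGreatest_great {P : ℕ → Prop} [DecidablePred P] {b k : ℕ}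
    (h1 : Nat.findGreatest P b < k) (h2 : k ≤ b) : ¬P k := Nat.findGreatest_is_greatest h1 h2

include hf0 in
lemma greedy_step {n k : ℕ} {r r' : ℝ} (hkle : k ≤ m n) (hb : rowSum f n k ≤ r)
    (hcu : r ≤ rowSum f n k + f n k)
    (hr' : r' = if f n k = 0 then 0 else (r - rowSum f n k) / f n k) :
    0 ≤ r' ∧ r' ≤ 1 ∧ r = rowSum f n k + f n k * r' := by
  refine ⟨?_, ?_, ?_⟩
  · rw [hr']; split
    · exact le_rfl
    · rename_i h0
      have hfk : 0 < f n k := lt_of_le_of_ne (hf0 n k hkle) (Ne.symm h0)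
      exact div_nonneg (by linarith) hfk.le
  · rw [hr']; split
    · exact zero_le_one
    · rename_i h0
      have hfk : 0 < f n k := lt_of_le_of_ne (hf0 n k hkle) (Ne.symm h0)
      rw [div_le_one hfk]; linarith
  · rw [hr']; split
    · rename_i h0
      have : r = rowSum f n k := le_antisymm (by simpa [h0] using hcu) hb
      rw [h0]; linarith
    · rename_i h0
      field_simp
      ring

include hf0 hf2 in
lemma greedy_surj
    (hf4 : ∀ d, ValidDigits m d →
      Tendsto (fun N => ∏ j ∈ Finset.Icc 1 N, f j (d j)) atTop (𝓝 0))
    {z : ℝ} (hz0 : 0 ≤ z) (hz1 : z ≤ 1) :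
    ∃ C, ValidDigits m C ∧ myVal f C 0 = z := by
  classical
  have dec : ∀ (n : ℕ) (r : ℝ), DecidablePred fun j => rowSum f n j ≤ r :=
    fun n r j => Classical.dec _
  let pick : ℕ → ℝ → ℕ := fun n r => @Nat.findGreatest (fun j => rowSum f n j ≤ r) (dec n r) (m n)
  let R : ℕ → ℝ := fun n => Nat.rec z (fun n r =>
    if f (n + 1) (pick (n + 1) r) = 0 then 0
    else (r - rowSum f (n + 1) (pick (n + 1) r)) / f (n + 1) (pick (n + 1) r)) n
  let C : ℕ → ℕ := fun n => pick n (R (n - 1))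
  have hpickle : ∀ n r, pick n r ≤ m n := fun n r => Nat.findGreatest_le (m n)
  have hpickb : ∀ n r, 0 ≤ r → rowSum f n (pick n r) ≤ r := by
    intro n r hr
    exact @my_findGreatest_spec (fun j => rowSum f n j ≤ r) (dec n r) (m n)
      (by simpa [rowSum] using hr)
  have hpickcu : ∀ n r, r ≤ 1 → r ≤ rowSum f n (pick n r) + f n (pick n r) := by
    intro n r hr
    rcases eq_or_lt_of_le (hpickle n r) with heq | hlt
    · rw [← rowSum_succ, heq]
      calc r ≤ 1 := hr
      _ = rowSum f n (m n + 1) := (hf2 n).symm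
    · have hng : ¬ rowSum f n (pick n r + 1) ≤ r :=
        @my_findGreatest_great (fun j => rowSum f n j ≤ r) (dec n r) (m n) _
          (Nat.lt_succ_self _) (by omega)
      rw [← rowSum_succ]
      linarith [not_le.1 hng]
  have hCval : ValidDigits m C := fun n => hpickle n _
  have hCdef : ∀ n, C (n + 1) = pick (n + 1) (R n) := fun n => rfl
  have hRdef : ∀ n, R (n + 1) = if f (n + 1) (C (n + 1)) = 0 then 0
      else (R n - rowSum f (n + 1) (C (n + 1))) / f (n + 1) (C (n + 1)) := fun n => rfl
  have hR0 : R 0 = z := rfl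
  have hstep : ∀ n, (0 ≤ R n ∧ R n ≤ 1) →
      (0 ≤ R (n + 1) ∧ R (n + 1) ≤ 1 ∧
        R n = rowSum f (n + 1) (C (n + 1)) + f (n + 1) (C (n + 1)) * R (n + 1)) := by
    intro n ⟨h0, h1⟩
    exact greedy_step hf0 (hCval (n + 1)) (hpickb (n + 1) (R n) h0)
      (hpickcu (n + 1) (R n) h1) (hRdef n)
  have hRrange : ∀ n, 0 ≤ R n ∧ R n ≤ 1 := by
    intro n
    induction n with
    | zero => exact ⟨hz0, hz1⟩
    | succ n ih => exact ⟨(hstep n ih).1, (hstep n ih).2.1⟩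
  have hkey : ∀ n, R n = rowSum f (n + 1) (C (n + 1)) + f (n + 1) (C (n + 1)) * R (n + 1) :=
    fun n => (hstep n (hRrange n)).2.2
  have hpref : ∀ n, z = (∑ j ∈ Finset.Icc 1 n, rowSum f j (C j) * ∏ t ∈ Finset.Icc 1 (j - 1),
      f t (C t)) + (∏ t ∈ Finset.Icc 1 n, f t (C t)) * R n := by
    intro n
    induction n with
    | zero => simp [hR0]
    | succ n ih =>
      rw [ih, Finset.sum_Icc_succ_top (by omega), Finset.prod_Icc_succ_top (by omega),
        hkey n]
      simp only [Nat.add_sub_cancel]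
      ring
  have hdiff : ∀ n, |z - myVal f C 0| ≤ ∏ t ∈ Finset.Icc 1 n, f t (C t) := by
    intro n
    have h1 := hpref n
    have h2 := myVal_prefix hf0 hf2 hCval n
    have hP : 0 ≤ ∏ t ∈ Finset.Icc 1 n, f t (C t) := prodA_nonneg hf0 hCval _
    have hd : z - myVal f C 0 = (∏ t ∈ Finset.Icc 1 n, f t (C t)) * (R n - myVal f C n) := by
      rw [h1, h2]; ring
    rw [hd, abs_mul, abs_of_nonneg hP]
    have hb : |R n - myVal f C n| ≤ 1 := by
      rw [abs_le]
      constructor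
      · linarith [(hRrange n).1, myVal_le_one hf0 hf2 hCval n]
      · linarith [(hRrange n).2, myVal_nonneg hf0 hCval n]
    nlinarith
  have hzero : Tendsto (fun _ : ℕ => z - myVal f C 0) atTop (𝓝 0) :=
    squeeze_zero_norm hdiff (hf4 C hCval)
  have := tendsto_nhds_unique hzero tendsto_const_nhds
  exact ⟨C, hCval, by linarith⟩

end Greedy

end Stmt13

namespace Stmt13

variable {m : ℕ → ℕ} {q p : ℕ → ℕ → ℝ} {c c' : ℕ → ℕ}

/-- Equality case: if the `q`-values agree but the digits differ (first difference at `n`,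
with `c n < c' n`), then the `p`-values agree as well. -/
lemma qp_eq_of_touch
    (hq1 : ∀ n i, i ≤ m n → 0 < q n i)
    (hq2 : ∀ n, ∑ i ∈ Finset.range (m n + 1), q n i = 1)
    (hp0 : ∀ n i, i ≤ m n → 0 ≤ p n i)
    (hp2 : ∀ n, ∑ i ∈ Finset.range (m n + 1), p n i = 1)
    (hpz : ∀ t, 0 < p t 0)
    (hp4 : ∀ d, ValidDigits m d →
      Tendsto (fun N => ∏ j ∈ Finset.Icc 1 N, p j (d j)) atTop (𝓝 0))
    (hc : ValidDigits m c) (hc' : ValidDigits m c') {n : ℕ} (hn : 1 ≤ n)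
    (hagree : ∀ t, 1 ≤ t → t < n → c t = c' t) (hlt : c n < c' n)
    (heq : myVal q c 0 = myVal q c' 0) :
    myVal p c 0 = myVal p c' 0 := by
  have hq0 : ∀ n i, i ≤ m n → 0 ≤ q n i := fun a i h => (hq1 a i h).le
  obtain ⟨nn, rfl⟩ : ∃ nn, n = nn + 1 := ⟨n - 1, by omega⟩
  -- prefix equality (for any weights g)
  have hpre : ∀ g : ℕ → ℕ → ℝ,
      (∑ j ∈ Finset.Icc 1 nn, rowSum g j (c j) * ∏ t ∈ Finset.Icc 1 (j - 1), g t (c t))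
      = ∑ j ∈ Finset.Icc 1 nn, rowSum g j (c' j) * ∏ t ∈ Finset.Icc 1 (j - 1), g t (c' t) := by
    intro g
    refine Finset.sum_congr rfl fun j hj => ?_
    obtain ⟨hj1, hj2⟩ := Finset.mem_Icc.1 hj
    rw [hagree j hj1 (by omega)]
    congr 1
    refine Finset.prod_congr rfl fun t ht => ?_
    obtain ⟨ht1, ht2⟩ := Finset.mem_Icc.1 ht
    rw [hagree t ht1 (by omega)]
  have hPP : ∀ g : ℕ → ℕ → ℝ,
      (∏ t ∈ Finset.Icc 1 nn, g t (c t)) = ∏ t ∈ Finset.Icc 1 nn, g t (c' t) := by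
    intro g
    refine Finset.prod_congr rfl fun t ht => ?_
    obtain ⟨ht1, ht2⟩ := Finset.mem_Icc.1 ht
    rw [hagree t ht1 (by omega)]
  -- q side: forced structure
  have hPq : 0 < ∏ t ∈ Finset.Icc 1 nn, q t (c t) :=
    Finset.prod_pos fun t _ => hq1 t (c t) (hc t)
  have hq_nn : myVal q c nn = myVal q c' nn := by
    have h1 := myVal_prefix hq0 hq2 hc nn
    have h2 := myVal_prefix hq0 hq2 hc' nn
    rw [h1, h2, hpre q, hPP q] at heq
    have hPq' : 0 < ∏ t ∈ Finset.Icc 1 nn, q t (c' t) := by rw [← hPP q]; exact hPq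
    have := mul_left_cancel₀ (ne_of_gt hPq') (by linarith : (∏ t ∈ Finset.Icc 1 nn, q t (c' t))
      * myVal q c nn = (∏ t ∈ Finset.Icc 1 nn, q t (c' t)) * myVal q c' nn)
    exact this
  have hrc := myVal_rec hq0 hq2 hc nn
  have hrc' := myVal_rec hq0 hq2 hc' nn
  have hW1 : myVal q c (nn + 1) ≤ 1 := myVal_le_one hq0 hq2 hc _
  have hW0 : 0 ≤ myVal q c (nn + 1) := myVal_nonneg hq0 hc _
  have hW1' : myVal q c' (nn + 1) ≤ 1 := myVal_le_one hq0 hq2 hc' _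
  have hW0' : 0 ≤ myVal q c' (nn + 1) := myVal_nonneg hq0 hc' _
  have hAq : 0 < q (nn + 1) (c (nn + 1)) := hq1 _ _ (hc (nn + 1))
  have hAq' : 0 < q (nn + 1) (c' (nn + 1)) := hq1 _ _ (hc' (nn + 1))
  have e1 : rowSum q (nn + 1) (c (nn + 1)) + q (nn + 1) (c (nn + 1))
      = rowSum q (nn + 1) (c (nn + 1) + 1) := (rowSum_succ _ _).symm
  have hmid : rowSum q (nn + 1) (c (nn + 1) + 1) ≤ rowSum q (nn + 1) (c' (nn + 1)) :=
    rowSum_mono hq0 (by omega) (by have := hc' (nn + 1); omega)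
  -- equalities forced
  have hWc : myVal q c (nn + 1) = 1 := by nlinarith [hq_nn, hrc, hrc']
  have hWc' : myVal q c' (nn + 1) = 0 := by nlinarith [hq_nn, hrc, hrc']
  have hsucc : c' (nn + 1) = c (nn + 1) + 1 := by
    by_contra hne
    have hlt2 : c (nn + 1) + 1 < c' (nn + 1) := by omega
    have e2 : rowSum q (nn + 1) (c (nn + 1) + 1) + q (nn + 1) (c (nn + 1) + 1)
        = rowSum q (nn + 1) (c (nn + 1) + 1 + 1) := (rowSum_succ _ _).symm
    have hmid2 : rowSum q (nn + 1) (c (nn + 1) + 1 + 1) ≤ rowSum q (nn + 1) (c' (nn + 1)) :=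
      rowSum_mono hq0 (by omega) (by have := hc' (nn + 1); omega)
    have hq3 : 0 < q (nn + 1) (c (nn + 1) + 1) := hq1 _ _ (by have := hc' (nn + 1); omega)
    nlinarith [hq_nn, hrc, hrc']
  -- digit tails
  have htailc : ∀ t, nn + 1 < t → c t = m t := eq_one_tail hq1 hq2 hc hWc
  have htailc' : ∀ t, nn + 1 < t → c' t = 0 := eq_zero_tail hq1 hq2 hc' hWc'
  -- p side
  have hp_c_n : myVal p c (nn + 1) = 1 := by
    refine myVal_top hp0 hp2 hc htailc ?_
    have he : ValidDigits m (fun t => if t ≤ nn + 1 then 0 else m t) := fun t => by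
      dsimp only; split
      · exact Nat.zero_le _
      · exact le_rfl
    have h4 := hp4 _ he
    have hsplit := tail_tendsto_zero (g := fun t => p t (if t ≤ nn + 1 then 0 else m t))
      (n := nn + 1)
      (fun t ht => by
        obtain ⟨ht1, ht2⟩ := Finset.mem_Icc.1 ht
        simp only [if_pos ht2]
        exact (hpz t).ne') h4
    apply hsplit.congr'
    filter_upwards [eventually_ge_atTop (nn + 1)] with N hN
    refine Finset.prod_congr rfl fun t ht => ?_
    obtain ⟨ht1, ht2⟩ := Finset.mem_Icc.1 ht
    rw [if_neg (by omega), htailc t (by omega)]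
  have hp_c'_n : myVal p c' (nn + 1) = 0 := myVal_bottom htailc'
  have hrcp := myVal_rec hp0 hp2 hc nn
  have hrcp' := myVal_rec hp0 hp2 hc' nn
  have hnn_eq : myVal p c nn = myVal p c' nn := by
    rw [hrcp, hrcp', hp_c_n, hp_c'_n, hsucc, rowSum_succ]
    ring
  rw [myVal_prefix hp0 hp2 hc nn, myVal_prefix hp0 hp2 hc' nn, hpre p, hPP p, hnn_eq]

section Cyl

variable (m) (p)

local instance : DecidableEq (ℕ → ℕ) := Classical.decEq _

/-- digits with positive `p`-weight -/
def Good (n : ℕ) : Finset ℕ := (Finset.range (m n + 1)).filter (fun i => 0 < p n i)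

/-- rank-`N` cylinder codes (zero-padded digit strings with all digits `Good`) -/
def SN : ℕ → Finset (ℕ → ℕ)
  | 0 => {fun _ => 0}
  | N + 1 => ((SN N) ×ˢ (Good m p (N + 1))).image fun ci => Function.update ci.1 (N + 1) ci.2

variable {m p}

lemma Good_le {n i : ℕ} (h : i ∈ Good m p n) : i ≤ m n := by
  have := (Finset.mem_filter.1 h).1
  have := Finset.mem_range.1 this
  omega

lemma Good_pos {n i : ℕ} (h : i ∈ Good m p n) : 0 < p n i := (Finset.mem_filter.1 h).2

lemma SN_mem : ∀ {N : ℕ} {c : ℕ → ℕ}, c ∈ SN m p N →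
    (∀ j, j = 0 ∨ N < j → c j = 0) ∧ ∀ j, 1 ≤ j → j ≤ N → c j ∈ Good m p j := by
  intro N
  induction N with
  | zero =>
    intro c hc
    rw [SN, Finset.mem_singleton] at hc
    subst hc
    exact ⟨fun j _ => rfl, fun j h1 h2 => by omega⟩
  | succ N ih =>
    intro c hc
    rw [SN, Finset.mem_image] at hc
    obtain ⟨⟨c', i⟩, hmem, rfl⟩ := hc
    obtain ⟨h1, h2⟩ := Finset.mem_product.1 hmem
    obtain ⟨ih1, ih2⟩ := ih h1
    constructor
    · intro j hj
      rw [Function.update_of_ne (by omega)]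
      exact ih1 j (by omega)
    · intro j hj1 hj2
      rcases eq_or_lt_of_le hj2 with heq | hlt
      · rw [heq, Function.update_self]
        exact h2
      · rw [Function.update_of_ne (by omega)]
        exact ih2 j hj1 (by omega)

lemma SN_valid {N : ℕ} {c : ℕ → ℕ} (h : c ∈ SN m p N) : ValidDigits m c := by
  intro j
  obtain ⟨h1, h2⟩ := SN_mem h
  rcases Nat.lt_or_ge N j with hj | hj
  · rw [h1 j (Or.inr hj)]; exact Nat.zero_le _
  · rcases Nat.eq_zero_or_pos j with rfl | hj0
    · rw [h1 0 (Or.inl rfl)]; exact Nat.zero_le _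
    · exact Good_le (h2 j hj0 hj)

lemma SN_sum (N : ℕ) (g : (ℕ → ℕ) → ℝ) :
    ∑ c ∈ SN m p (N + 1), g c
      = ∑ c ∈ SN m p N, ∑ i ∈ Good m p (N + 1), g (Function.update c (N + 1) i) := by
  rw [SN, Finset.sum_image, Finset.sum_product]
  rintro ⟨c, i⟩ hci ⟨c', i'⟩ hci' heq
  obtain ⟨hc, hi⟩ := Finset.mem_product.1 hci
  obtain ⟨hc', hi'⟩ := Finset.mem_product.1 hci'
  dsimp only at hc hi hc' hi' heq ⊢
  have hieq : i = i' := by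
    have := congrFun heq (N + 1)
    simpa using this
  have hceq : c = c' := by
    funext j
    rcases eq_or_ne j (N + 1) with rfl | hne
    · rw [(SN_mem hc).1 (N + 1) (Or.inr (by omega)),
        (SN_mem hc').1 (N + 1) (Or.inr (by omega))]
    · have := congrFun heq j
      rwa [Function.update_of_ne hne, Function.update_of_ne hne] at this
  rw [hieq, hceq]

lemma update_prod (g : ℕ → ℕ → ℝ) (c : ℕ → ℕ) (N i : ℕ) :
    ∏ t ∈ Finset.Icc 1 (N + 1), g t (Function.update c (N + 1) i t)
      = (∏ t ∈ Finset.Icc 1 N, g t (c t)) * g (N + 1) i := by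
  rw [Finset.prod_Icc_succ_top (by omega), Function.update_self]
  congr 1
  refine Finset.prod_congr rfl fun t ht => ?_
  obtain ⟨ht1, ht2⟩ := Finset.mem_Icc.1 ht
  rw [Function.update_of_ne (by omega)]

lemma SN_prod_sum (g : ℕ → ℕ → ℝ) (N : ℕ) :
    ∑ c ∈ SN m p N, ∏ t ∈ Finset.Icc 1 N, g t (c t)
      = ∏ n ∈ Finset.Icc 1 N, ∑ i ∈ Good m p n, g n i := by
  induction N with
  | zero => simp [SN]
  | succ N ih =>
    rw [SN_sum, Finset.prod_Icc_succ_top (by omega), ← ih, Finset.sum_mul]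
    refine Finset.sum_congr rfl fun c hc => ?_
    rw [Finset.mul_sum]
    refine Finset.sum_congr rfl fun i hi => ?_
    exact update_prod g c N i

end Cyl

end Stmt13

namespace Stmt13

variable {m : ℕ → ℕ} {q p f : ℕ → ℕ → ℝ} {c c' : ℕ → ℕ}

lemma myVal_split (hf0 : ∀ n i, i ≤ m n → 0 ≤ f n i)
    (hf2 : ∀ n, ∑ i ∈ Finset.range (m n + 1), f n i = 1)
    (hc : ValidDigits m c) (hc' : ValidDigits m c') (N : ℕ)
    (hag : ∀ t, 1 ≤ t → t ≤ N → c t = c' t)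
    (hbot : myVal f c N = 0) (htop1 : myVal f c' N = 1) :
    myVal f c' 0 = myVal f c 0 + ∏ t ∈ Finset.Icc 1 N, f t (c t) := by
  rw [myVal_prefix hf0 hf2 hc N, myVal_prefix hf0 hf2 hc' N, hbot, htop1]
  have h1 : (∑ j ∈ Finset.Icc 1 N, rowSum f j (c j) * ∏ t ∈ Finset.Icc 1 (j - 1), f t (c t))
      = ∑ j ∈ Finset.Icc 1 N, rowSum f j (c' j) * ∏ t ∈ Finset.Icc 1 (j - 1), f t (c' t) := by
    refine Finset.sum_congr rfl fun j hj => ?_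
    obtain ⟨hj1, hj2⟩ := Finset.mem_Icc.1 hj
    rw [hag j hj1 hj2]
    congr 1
    refine Finset.prod_congr rfl fun t ht => ?_
    obtain ⟨ht1, ht2⟩ := Finset.mem_Icc.1 ht
    rw [hag t ht1 (by omega)]
  have h2 : (∏ t ∈ Finset.Icc 1 N, f t (c t)) = ∏ t ∈ Finset.Icc 1 N, f t (c' t) := by
    refine Finset.prod_congr rfl fun t ht => ?_
    obtain ⟨ht1, ht2⟩ := Finset.mem_Icc.1 ht
    rw [hag t ht1 ht2]
  rw [h1, h2]
  ring

section Sing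

variable {m : ℕ → ℕ} {q p : ℕ → ℕ → ℝ}

lemma tw_if_sum_pos (n : ℕ) :
    (∑ i ∈ Finset.range (m n + 1), if 0 < tw m p n i then tw m q n i else 0)
      = ∑ i ∈ Finset.range (m n + 1), if 0 < p n i then q n i else 0 := by
  unfold tw
  by_cases h : Odd n
  · simp only [if_pos h]
  · simp only [if_neg h]
    have := Finset.sum_range_reflect (fun i => if 0 < p n i then q n i else 0) (m n + 1)
    simp only [Nat.add_sub_cancel] at this
    exact this

lemma tw_if_sum_zero (n : ℕ) :
    (∑ i ∈ Finset.range (m n + 1), if tw m p n i = 0 then tw m q n i else 0)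
      = ∑ i ∈ Finset.range (m n + 1), if p n i = 0 then q n i else 0 := by
  unfold tw
  by_cases h : Odd n
  · simp only [if_pos h]
  · simp only [if_neg h]
    have := Finset.sum_range_reflect (fun i => if p n i = 0 then q n i else 0) (m n + 1)
    simp only [Nat.add_sub_cancel] at this
    exact this

lemma sq_prod_tendsto
    (hq0 : ∀ n i, i ≤ m n → 0 ≤ q n i)
    (hq2 : ∀ n, ∑ i ∈ Finset.range (m n + 1), q n i = 1)
    (hp0 : ∀ n i, i ≤ m n → 0 ≤ p n i)
    (hsing :
      Tendsto (fun N => ∏ n ∈ Finset.Icc 1 N,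
        ∑ i ∈ Finset.range (m n + 1), if 0 < tw m p n i then tw m q n i else 0)
        atTop (𝓝 0) ∨
      ¬ Summable (fun n : ℕ =>
        ∑ i ∈ Finset.range (m (n + 1) + 1),
          if tw m p (n + 1) i = 0 then tw m q (n + 1) i else 0)) :
    Tendsto (fun N => ∏ n ∈ Finset.Icc 1 N,
      ∑ i ∈ Finset.range (m n + 1), if 0 < p n i then q n i else 0) atTop (𝓝 0) := by
  set sq : ℕ → ℝ := fun n => ∑ i ∈ Finset.range (m n + 1), if 0 < p n i then q n i else 0
    with hsqdef
  set tz : ℕ → ℝ := fun n => ∑ i ∈ Finset.range (m n + 1), if p n i = 0 then q n i else 0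
    with htzdef
  rcases hsing with h1 | h2
  · have : (fun N => ∏ n ∈ Finset.Icc 1 N,
        ∑ i ∈ Finset.range (m n + 1), if 0 < tw m p n i then tw m q n i else 0)
        = fun N => ∏ n ∈ Finset.Icc 1 N, sq n :=
      funext fun N => Finset.prod_congr rfl fun n _ => tw_if_sum_pos n
    rwa [this] at h1
  · have h2' : ¬ Summable (fun n => tz (n + 1)) := by
      have : (fun n : ℕ => ∑ i ∈ Finset.range (m (n + 1) + 1),
          if tw m p (n + 1) i = 0 then tw m q (n + 1) i else 0) = fun n => tz (n + 1) :=
        funext fun n => tw_if_sum_zero (n + 1)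
      rwa [this] at h2
    have htz0 : ∀ n, 0 ≤ tz n := fun n => Finset.sum_nonneg fun i hi => by
      split
      · exact hq0 n i (by have := Finset.mem_range.1 hi; omega)
      · exact le_rfl
    have hsq0 : ∀ n, 0 ≤ sq n := fun n => Finset.sum_nonneg fun i hi => by
      split
      · exact hq0 n i (by have := Finset.mem_range.1 hi; omega)
      · exact le_rfl
    have hsum1 : ∀ n, sq n + tz n = 1 := by
      intro n
      rw [hsqdef, htzdef, ← Finset.sum_add_distrib, ← hq2 n]
      refine Finset.sum_congr rfl fun i hi => ?_
      have hile : i ≤ m n := by have := Finset.mem_range.1 hi; omega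
      rcases (hp0 n i hile).lt_or_eq with hpos | hzero
      · rw [if_pos hpos, if_neg (by linarith), add_zero]
      · rw [if_neg (by rw [← hzero]; exact lt_irrefl 0), if_pos hzero.symm, zero_add]
    have hS : Tendsto (fun N => ∑ n ∈ Finset.Icc 1 N, tz n) atTop atTop := by
      have hS0 := (not_summable_iff_tendsto_nat_atTop_of_nonneg
        (fun n => htz0 (n + 1))).1 h2'
      apply hS0.congr
      intro N
      induction N with
      | zero => simp
      | succ N ih => rw [Finset.sum_range_succ, ih, Finset.sum_Icc_succ_top (by omega)]
    have hbound : ∀ N, ∏ n ∈ Finset.Icc 1 N, sq n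
        ≤ Real.exp (-(∑ n ∈ Finset.Icc 1 N, tz n)) := by
      intro N
      calc ∏ n ∈ Finset.Icc 1 N, sq n ≤ ∏ n ∈ Finset.Icc 1 N, Real.exp (-(tz n)) := by
            refine Finset.prod_le_prod (fun n _ => hsq0 n) fun n _ => ?_
            have := Real.add_one_le_exp (-(tz n))
            have := hsum1 n
            linarith
      _ = Real.exp (∑ n ∈ Finset.Icc 1 N, -(tz n)) := (Real.exp_sum _ _).symm
      _ = Real.exp (-(∑ n ∈ Finset.Icc 1 N, tz n)) := by rw [← Finset.sum_neg_distrib]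
    have hexp : Tendsto (fun N => Real.exp (-(∑ n ∈ Finset.Icc 1 N, tz n))) atTop (𝓝 0) :=
      Real.tendsto_exp_atBot.comp (tendsto_neg_atBot_iff.2 hS)
    refine squeeze_zero (fun N => Finset.prod_nonneg fun n _ => hsq0 n) hbound hexp
end Sing

/-- top-padded truncation -/
def Ct (m : ℕ → ℕ) (N : ℕ) (c : ℕ → ℕ) (j : ℕ) : ℕ := if j ≤ N then c j else m j

lemma Ct_valid {N : ℕ} (hcv : ValidDigits m c) : ValidDigits m (Ct m N c) := fun j => by
  unfold Ct; split
  exacts [hcv j, le_rfl]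

lemma Ct_le {N j : ℕ} (h : j ≤ N) : Ct m N c j = c j := if_pos h

lemma Ct_gt {N j : ℕ} (h : N < j) : Ct m N c j = m j := if_neg (by omega)

end Stmt13

open Stmt13

/-- sufficient conditions for `F` to be a singular (Cantor-type)
distribution function: continuous, nondecreasing, with derivative `0` almost everywhere. -/
theorem stmt13 (m : ℕ → ℕ) (q p : ℕ → ℕ → ℝ)
    (hq1 : ∀ n i, i ≤ m n → 0 < q n i)
    (hq2 : ∀ n, ∑ i ∈ Finset.range (m n + 1), q n i = 1)
    (hq4 : ∀ d, ValidDigits m d →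
      Tendsto (fun N => ∏ j ∈ Finset.Icc 1 N, q j (d j)) atTop (𝓝 0))
    (hp0 : ∀ n i, i ≤ m n → 0 ≤ p n i)
    (hp1 : ∀ n i, i ≤ m n → p n i < 1)
    (hp2 : ∀ n, ∑ i ∈ Finset.range (m n + 1), p n i = 1)
    (hp3 : ∀ n k, 1 ≤ k → k ≤ m n → rowSum p n k ∈ Set.Ioo (0 : ℝ) 1)
    (hp4 : ∀ d, ValidDigits m d →
      Tendsto (fun N => ∏ j ∈ Finset.Icc 1 N, p j (d j)) atTop (𝓝 0))
    (G : ℝ → ℝ)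
    (hG : ∀ d, ValidDigits m d → G (negaVal m q d) = negaVal m p d)
    (hsurj : ∀ x ∈ Set.Icc (0 : ℝ) 1, ∃ d, ValidDigits m d ∧ x = negaVal m q d)
    (hsing :
      Tendsto (fun N => ∏ n ∈ Finset.Icc 1 N,
        ∑ i ∈ Finset.range (m n + 1), if 0 < tw m p n i then tw m q n i else 0)
        atTop (𝓝 0) ∨
      ¬ Summable (fun n : ℕ =>
        ∑ i ∈ Finset.range (m (n + 1) + 1),
          if tw m p (n + 1) i = 0 then tw m q (n + 1) i else 0)) :
    ContinuousOn G (Set.Icc (0 : ℝ) 1) ∧ MonotoneOn G (Set.Icc (0 : ℝ) 1) ∧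
      ∀ᵐ x ∂(volume.restrict (Set.Icc (0 : ℝ) 1)), HasDerivAt G 0 x := by
  classical
  have hq0 : ∀ n i, i ≤ m n → 0 ≤ q n i := fun n i h => (hq1 n i h).le
  have hm1 : ∀ n, 1 ≤ m n := by
    intro n
    by_contra hcon
    have hm0 : m n = 0 := by omega
    have h2 := hp2 n
    rw [hm0] at h2
    simp [Finset.sum_range_one] at h2
    have h1 := hp1 n 0 (by omega)
    linarith
  have hpz : ∀ t, 0 < p t 0 := by
    intro t
    have h := (hp3 t 1 le_rfl (hm1 t)).1
    simpa [rowSum, Finset.sum_range_one] using h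
  have hG' : ∀ c, ValidDigits m c → G (myVal q c 0) = myVal p c 0 := by
    intro c hcv
    have h1 := hG (dd m c) (dd_valid hcv)
    rwa [negaVal, negaVal, negaShift_eq, negaShift_eq, dd_dd hcv] at h1
  have hsurj' : ∀ x, 0 ≤ x → x ≤ 1 → ∃ c, ValidDigits m c ∧ x = myVal q c 0 := by
    intro x h0 h1
    obtain ⟨d, hdv, hx⟩ := hsurj x ⟨h0, h1⟩
    refine ⟨dd m d, dd_valid hdv, ?_⟩
    rwa [negaVal, negaShift_eq] at hx
  -- core comparison
  have hcomp : ∀ cx cy, ValidDigits m cx → ValidDigits m cy →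
      myVal q cx 0 ≤ myVal q cy 0 → myVal p cx 0 ≤ myVal p cy 0 := by
    intro cx cy hcx hcy hle
    by_cases hsame : ∀ t, 1 ≤ t → cx t = cy t
    · rw [myVal_congr 0 hsame]
    · push_neg at hsame
      obtain ⟨n0, hn01, hn0⟩ := hsame
      have hex : ∃ n, 1 ≤ n ∧ cx n ≠ cy n := ⟨n0, hn01, hn0⟩
      have hn1 : 1 ≤ Nat.find hex := (Nat.find_spec hex).1
      have hne := (Nat.find_spec hex).2
      have hagree : ∀ t, 1 ≤ t → t < Nat.find hex → cx t = cy t := by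
        intro t h1t hlt
        by_contra hcne
        exact Nat.find_min hex hlt ⟨h1t, hcne⟩
      rcases lt_or_gt_of_ne hne with hl | hg
      · exact myVal_le_of_lt hp0 hp2 hcx hcy hn1 hagree hl
      · have hyx : myVal q cy 0 ≤ myVal q cx 0 :=
          myVal_le_of_lt hq0 hq2 hcy hcx hn1 (fun t a b => (hagree t a b).symm) hg
        have heq2 : myVal q cy 0 = myVal q cx 0 := le_antisymm hyx hle
        have := qp_eq_of_touch hq1 hq2 hp0 hp2 hpz hp4 hcy hcx hn1
          (fun t a b => (hagree t a b).symm) hg heq2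
        exact le_of_eq this.symm
  have hmono : MonotoneOn G (Set.Icc 0 1) := by
    rintro x ⟨hx0, hx1⟩ y ⟨hy0, hy1⟩ hxy
    obtain ⟨cx, hcx, hxe⟩ := hsurj' x hx0 hx1
    obtain ⟨cy, hcy, hye⟩ := hsurj' y hy0 hy1
    rw [hxe, hye, hG' cx hcx, hG' cy hcy]
    exact hcomp cx cy hcx hcy (by rw [← hxe, ← hye]; exact hxy)
  have hGrange : ∀ x, 0 ≤ x → x ≤ 1 → 0 ≤ G x ∧ G x ≤ 1 := by
    intro x h0 h1
    obtain ⟨c, hcv, hxe⟩ := hsurj' x h0 h1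
    rw [hxe, hG' c hcv]
    exact ⟨myVal_nonneg hp0 hcv 0, myVal_le_one hp0 hp2 hcv 0⟩
  have hG0 : G 0 = 0 := by
    obtain ⟨c, hcv, h0e⟩ := hsurj' 0 le_rfl zero_le_one
    have hGc := hG' c hcv
    rw [← h0e] at hGc
    rw [hGc]
    exact myVal_bottom (eq_zero_tail hq1 hq2 hcv h0e.symm)
  have hG1 : G 1 = 1 := by
    obtain ⟨c, hcv, h1e⟩ := hsurj' 1 zero_le_one le_rfl
    have hGc := hG' c hcv
    rw [← h1e] at hGc
    rw [hGc]
    exact myVal_top hp0 hp2 hcv (eq_one_tail hq1 hq2 hcv h1e.symm) (hp4 c hcv)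
  have hGsurj : ∀ z, 0 ≤ z → z ≤ 1 → ∃ x, 0 ≤ x ∧ x ≤ 1 ∧ G x = z := by
    intro z h0 h1
    obtain ⟨C, hCv, hCz⟩ := greedy_surj hp0 hp2 hp4 h0 h1
    exact ⟨myVal q C 0, myVal_nonneg hq0 hCv 0, myVal_le_one hq0 hq2 hCv 0,
      by rw [hG' C hCv, hCz]⟩
  -- global extension
  set H' : ℝ → ℝ := fun x => if x ∈ Set.Icc (0:ℝ) 1 then G x else x with hH'def
  have hH'Icc : ∀ x, x ∈ Set.Icc (0:ℝ) 1 → H' x = G x := fun x hx => if_pos hx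
  have hH'out : ∀ x, x ∉ Set.Icc (0:ℝ) 1 → H' x = x := fun x hx => if_neg hx
  have hH'mono : Monotone H' := by
    intro x y hxy
    by_cases hx : x ∈ Set.Icc (0:ℝ) 1 <;> by_cases hy : y ∈ Set.Icc (0:ℝ) 1
    · rw [hH'Icc x hx, hH'Icc y hy]
      exact hmono hx hy hxy
    · have hy1 : 1 < y := by
        simp only [Set.mem_Icc, not_and_or, not_le] at hy
        rcases hy with h | h
        · linarith [hx.1]
        · exact h
      rw [hH'Icc x hx, hH'out y hy]
      calc G x ≤ 1 := (hGrange x hx.1 hx.2).2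
      _ ≤ y := hy1.le
    · have hx0 : x < 0 := by
        simp only [Set.mem_Icc, not_and_or, not_le] at hx
        rcases hx with h | h
        · exact h
        · linarith [hy.2]
      rw [hH'out x hx, hH'Icc y hy]
      calc x ≤ 0 := hx0.le
      _ ≤ G y := (hGrange y hy.1 hy.2).1
    · rw [hH'out x hx, hH'out y hy]
      exact hxy
  have hH'surj : Function.Surjective H' := by
    intro z
    rcases le_or_gt 0 z with h0 | h0
    · rcases le_or_gt z 1 with h1 | h1
      · obtain ⟨x, hx0, hx1, hGx⟩ := hGsurj z h0 h1
        exact ⟨x, by rw [hH'Icc x ⟨hx0, hx1⟩, hGx]⟩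
      · exact ⟨z, hH'out z fun hmem => absurd hmem.2 (not_le.2 h1)⟩
    · exact ⟨z, hH'out z fun hmem => absurd hmem.1 (not_le.2 h0)⟩
  have hH'cont : Continuous H' := hH'mono.continuous_of_surjective hH'surj
  have hcontG : ContinuousOn G (Set.Icc 0 1) := by
    refine hH'cont.continuousOn.congr ?_
    intro x hx
    exact (hH'Icc x hx).symm
  refine ⟨hcontG, hmono, ?_⟩
  -- clamped Stieltjes function
  have clamp_mem : ∀ x : ℝ, max 0 (min 1 x) ∈ Set.Icc (0:ℝ) 1 :=
    fun x => ⟨le_max_left _ _, max_le zero_le_one (min_le_left _ _)⟩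
  set Hc : ℝ → ℝ := fun x => G (max 0 (min 1 x)) with hHcdef
  have hHc_at : ∀ x, x ∈ Set.Icc (0:ℝ) 1 → Hc x = G x := by
    intro x hx
    rw [hHcdef]
    simp only
    rw [min_eq_right hx.2, max_eq_right hx.1]
  have hHc_cont : Continuous Hc := by
    have : Hc = H' ∘ (fun x => max 0 (min 1 x)) := by
      funext x
      simp only [Function.comp]
      exact (hH'Icc _ (clamp_mem x)).symm
    rw [this]
    exact hH'cont.comp (continuous_const.max (continuous_const.min continuous_id))
  have hHc_mono : Monotone Hc := fun x y hxy =>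
    hmono (clamp_mem x) (clamp_mem y) (max_le_max le_rfl (min_le_min le_rfl hxy))
  set HS : StieltjesFunction ℝ := ⟨Hc, hHc_mono, fun x => hHc_cont.continuousWithinAt⟩
    with hHSdef
  have hHS_app : ∀ x, HS x = Hc x := fun x => rfl
  have hbot : Tendsto Hc atBot (𝓝 0) := by
    refine tendsto_const_nhds.congr' ?_
    filter_upwards [eventually_le_atBot (0:ℝ)] with x hx
    rw [hHcdef]
    simp only
    rw [min_eq_right (by linarith), max_eq_left (by linarith), hG0]
  have htop : Tendsto Hc atTop (𝓝 1) := by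
    refine tendsto_const_nhds.congr' ?_
    filter_upwards [eventually_ge_atTop (1:ℝ)] with x hx
    rw [hHcdef]
    simp only
    rw [min_eq_left (by linarith), max_eq_right (by linarith), hG1]
  have hμuniv : HS.measure Set.univ = 1 := by
    rw [HS.measure_univ hbot htop]
    simp
  -- cylinder endpoints
  have hcyl : ∀ N (c : ℕ → ℕ), c ∈ SN m p N →
      myVal q (Ct m N c) 0 = myVal q c 0 + ∏ t ∈ Finset.Icc 1 N, q t (c t) ∧
      myVal p (Ct m N c) 0 = myVal p c 0 + ∏ t ∈ Finset.Icc 1 N, p t (c t) := by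
    intro N c hc
    have hcv := SN_valid hc
    have hTv : ValidDigits m (Ct m N c) := Ct_valid hcv
    have hag : ∀ t, 1 ≤ t → t ≤ N → c t = Ct m N c t := fun t _ h2 => (Ct_le h2).symm
    have hzt : ∀ t, N < t → c t = 0 := fun t ht => (SN_mem hc).1 t (Or.inr ht)
    have hTt : ∀ t, N < t → Ct m N c t = m t := fun t ht => Ct_gt ht
    constructor
    · refine myVal_split hq0 hq2 hcv hTv N hag (myVal_bottom hzt) ?_
      refine myVal_top hq0 hq2 hTv hTt ?_
      exact tail_tendsto_zero
        (fun t ht => (hq1 t _ (hTv t)).ne') (hq4 _ hTv)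
    · refine myVal_split hp0 hp2 hcv hTv N hag (myVal_bottom hzt) ?_
      refine myVal_top hp0 hp2 hTv hTt ?_
      refine tail_tendsto_zero (fun t ht => ?_) (hp4 _ hTv)
      obtain ⟨ht1, ht2⟩ := Finset.mem_Icc.1 ht
      rw [Ct_le ht2]
      exact (Good_pos ((SN_mem hc).2 t ht1 ht2)).ne'
  -- cylinder values in [0,1]
  have hLR : ∀ N (c : ℕ → ℕ), c ∈ SN m p N →
      0 ≤ myVal q c 0 ∧ myVal q (Ct m N c) 0 ≤ 1 ∧ myVal q c 0 ≤ 1 ∧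
        0 ≤ myVal q (Ct m N c) 0 := by
    intro N c hc
    have hcv := SN_valid hc
    have hTv : ValidDigits m (Ct m N c) := Ct_valid hcv
    exact ⟨myVal_nonneg hq0 hcv 0, myVal_le_one hq0 hq2 hTv 0, myVal_le_one hq0 hq2 hcv 0,
      myVal_nonneg hq0 hTv 0⟩
  -- ordering of distinct cylinders
  have horder : ∀ N (c c' : ℕ → ℕ), c ∈ SN m p N → c' ∈ SN m p N →
      (∃ n, 1 ≤ n ∧ c n < c' n ∧ ∀ t, 1 ≤ t → t < n → c t = c' t) →
      myVal q (Ct m N c) 0 ≤ myVal q c' 0 := by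
    rintro N c c' hc hc' ⟨n, hn1, hlt, hag⟩
    have hnN : n ≤ N := by
      by_contra hcon
      have := (SN_mem hc').1 n (Or.inr (by omega))
      omega
    refine myVal_le_of_lt hq0 hq2 (Ct_valid (SN_valid hc)) (SN_valid hc') hn1 ?_ ?_
    · intro t h1 h2
      rw [Ct_le (by omega)]
      exact hag t h1 h2
    · rw [Ct_le hnN]
      exact hlt
  have hdisj : ∀ N, Set.PairwiseDisjoint ↑(SN m p N)
      (fun c => Set.Ioc (myVal q c 0) (myVal q (Ct m N c) 0)) := by
    intro N c hc c' hc' hne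
    have hex : ∃ n, 1 ≤ n ∧ c n ≠ c' n := by
      by_contra hno
      push_neg at hno
      apply hne
      funext j
      rcases Nat.eq_zero_or_pos j with rfl | hj
      · rw [(SN_mem hc).1 0 (Or.inl rfl), (SN_mem hc').1 0 (Or.inl rfl)]
      · exact hno j hj
    have hspec := Nat.find_spec hex
    have hag : ∀ t, 1 ≤ t → t < Nat.find hex → c t = c' t := by
      intro t h1t h2t
      by_contra hcne
      exact Nat.find_min hex h2t ⟨h1t, hcne⟩
    rcases lt_or_gt_of_ne hspec.2 with hl | hg
    · have hRL := horder N c c' hc hc' ⟨Nat.find hex, hspec.1, hl, hag⟩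
      refine Set.disjoint_left.2 fun x hx hx' => ?_
      have h1 : x ≤ myVal q (Ct m N c) 0 := hx.2
      have h2 : myVal q c' 0 < x := hx'.1
      linarith
    · have hRL := horder N c' c hc' hc
        ⟨Nat.find hex, hspec.1, hg, fun t a b => (hag t a b).symm⟩
      refine Set.disjoint_left.2 fun x hx hx' => ?_
      have h1 : x ≤ myVal q (Ct m N c') 0 := hx'.2
      have h2 : myVal q c 0 < x := hx.1
      linarith
  -- Good sums
  have hGoodp : ∀ n, ∑ i ∈ Good m p n, p n i = 1 := by
    intro n
    rw [Good, Finset.sum_filter, ← hp2 n]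
    refine Finset.sum_congr rfl fun i hi => ?_
    have hile : i ≤ m n := by have := Finset.mem_range.1 hi; omega
    rcases (hp0 n i hile).lt_or_eq with h | h
    · rw [if_pos h]
    · rw [if_neg (by rw [← h]; exact lt_irrefl 0), ← h]
  have hGoodq : ∀ n, ∑ i ∈ Good m p n, q n i
      = ∑ i ∈ Finset.range (m n + 1), if 0 < p n i then q n i else 0 := by
    intro n
    rw [Good, Finset.sum_filter]
  -- the good sets
  set U : ℕ → Set ℝ := fun N => ⋃ c ∈ SN m p N,
    Set.Icc (myVal q c 0) (myVal q (Ct m N c) 0) with hUdef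
  have hUmeas : ∀ N, MeasurableSet (U N) := fun N =>
    Finset.measurableSet_biUnion _ (fun c _ => measurableSet_Icc)
  -- μ gives U N full measure
  have hμU : ∀ N, HS.measure (U N)ᶜ = 0 := by
    intro N
    have hioc : (⋃ c ∈ SN m p N, Set.Ioc (myVal q c 0) (myVal q (Ct m N c) 0)) ⊆ U N := by
      refine Set.iUnion₂_mono fun c hc => Set.Ioc_subset_Icc_self
    have hsum : HS.measure (⋃ c ∈ SN m p N, Set.Ioc (myVal q c 0) (myVal q (Ct m N c) 0))
        = ∑ c ∈ SN m p N, HS.measure (Set.Ioc (myVal q c 0) (myVal q (Ct m N c) 0)) :=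
      measure_biUnion_finset (hdisj N) (fun c _ => measurableSet_Ioc)
    have hval : ∀ c ∈ SN m p N,
        HS.measure (Set.Ioc (myVal q c 0) (myVal q (Ct m N c) 0))
          = ENNReal.ofReal (∏ t ∈ Finset.Icc 1 N, p t (c t)) := by
      intro c hc
      rw [StieltjesFunction.measure_Ioc]
      obtain ⟨hL0, hR1, hL1, hR0⟩ := hLR N c hc
      rw [hHS_app, hHS_app, hHc_at _ ⟨hR0, hR1⟩, hHc_at _ ⟨hL0, hL1⟩,
        hG' _ (Ct_valid (SN_valid hc)), hG' _ (SN_valid hc), (hcyl N c hc).2]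
      congr 1
      ring
    have htot : HS.measure (⋃ c ∈ SN m p N,
        Set.Ioc (myVal q c 0) (myVal q (Ct m N c) 0)) = 1 := by
      rw [hsum, Finset.sum_congr rfl hval,
        ← ENNReal.ofReal_sum_of_nonneg (fun c hc => Finset.prod_nonneg
          (fun t _ => hp0 t _ (SN_valid hc t))),
        SN_prod_sum, Finset.prod_congr rfl (fun n _ => hGoodp n), Finset.prod_const_one]
      exact ENNReal.ofReal_one
    have hU1 : HS.measure (U N) = 1 := by
      refine le_antisymm ?_ ?_
      · rw [← hμuniv]
        exact measure_mono (Set.subset_univ _)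
      · rw [← htot]
        exact measure_mono hioc
    rw [measure_compl (hUmeas N) (by rw [hU1]; exact ENNReal.one_ne_top), hμuniv, hU1, tsub_self]
  -- volume bound
  have hvolU : ∀ N, volume (U N) ≤ ENNReal.ofReal (∏ n ∈ Finset.Icc 1 N,
      ∑ i ∈ Finset.range (m n + 1), if 0 < p n i then q n i else 0) := by
    intro N
    calc volume (U N) ≤ ∑ c ∈ SN m p N,
        volume (Set.Icc (myVal q c 0) (myVal q (Ct m N c) 0)) :=
          measure_biUnion_finset_le _ _
    _ = ∑ c ∈ SN m p N, ENNReal.ofReal (∏ t ∈ Finset.Icc 1 N, q t (c t)) := by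
        refine Finset.sum_congr rfl fun c hc => ?_
        rw [Real.volume_Icc, (hcyl N c hc).1]
        congr 1
        ring
    _ = ENNReal.ofReal (∑ c ∈ SN m p N, ∏ t ∈ Finset.Icc 1 N, q t (c t)) :=
        (ENNReal.ofReal_sum_of_nonneg (fun c hc => Finset.prod_nonneg
          (fun t _ => hq0 t _ (SN_valid hc t)))).symm
    _ = ENNReal.ofReal (∏ n ∈ Finset.Icc 1 N,
          ∑ i ∈ Finset.range (m n + 1), if 0 < p n i then q n i else 0) := by
        rw [SN_prod_sum, Finset.prod_congr rfl (fun n _ => hGoodq n)]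
  -- the null carrier
  set K : Set ℝ := ⋂ N, U N with hKdef
  have hKmeas : MeasurableSet K := MeasurableSet.iInter fun N => hUmeas N
  have hvolK : volume K = 0 := by
    have hsq := sq_prod_tendsto hq0 hq2 hp0 hsing
    have htendsto : Tendsto (fun N => ENNReal.ofReal (∏ n ∈ Finset.Icc 1 N,
        ∑ i ∈ Finset.range (m n + 1), if 0 < p n i then q n i else 0)) atTop (𝓝 0) := by
      have := ENNReal.tendsto_ofReal hsq
      rwa [ENNReal.ofReal_zero] at this
    refine le_antisymm ?_ zero_le
    refine ge_of_tendsto' htendsto fun N => ?_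
    exact le_trans (measure_mono (Set.iInter_subset _ N)) (hvolU N)
  have hμKc : HS.measure Kᶜ = 0 := by
    rw [hKdef, Set.compl_iInter]
    refine le_antisymm (le_trans (measure_iUnion_le _) ?_) zero_le
    simp [hμU]
  have hms : HS.measure ⟂ₘ volume := ⟨Kᶜ, hKmeas.compl, hμKc, by rwa [compl_compl]⟩
  have hrn : HS.measure.rnDeriv volume =ᵐ[volume] 0 :=
    hms.rnDeriv_ae_eq_zero
  have hae : ∀ᵐ x ∂(volume : Measure ℝ), HasDerivAt Hc 0 x := by
    filter_upwards [HS.ae_hasDerivAt, hrn] with x h1 h2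
    have h2' : HS.measure.rnDeriv volume x = 0 := by simpa using h2
    simpa [h2'] using h1
  have h01 : ∀ᵐ x ∂(volume : Measure ℝ), x ≠ 0 ∧ x ≠ 1 := by
    have h0 : ∀ᵐ x ∂(volume : Measure ℝ), x ≠ 0 := by
      rw [ae_iff]
      simp only [not_not, Set.setOf_eq_eq_singleton]
      exact Real.volume_singleton
    have h1 : ∀ᵐ x ∂(volume : Measure ℝ), x ≠ 1 := by
      rw [ae_iff]
      simp only [not_not, Set.setOf_eq_eq_singleton]
      exact Real.volume_singleton
    exact h0.and h1
  filter_upwards [ae_restrict_of_ae hae, ae_restrict_mem measurableSet_Icc,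
    ae_restrict_of_ae h01] with x hx hmem hx01
  have hxIoo : x ∈ Set.Ioo (0:ℝ) 1 :=
    ⟨lt_of_le_of_ne hmem.1 (Ne.symm hx01.1), lt_of_le_of_ne hmem.2 hx01.2⟩
  have hev : G =ᶠ[𝓝 x] Hc := by
    filter_upwards [isOpen_Ioo.mem_nhds hxIoo] with y hy
    exact (hHc_at y ⟨hy.1.le, hy.2.le⟩).symm
  exact hx.congr_of_eventuallyEq hev
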